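/- Soundness of the HDML axiomatic system: for every HDML formula φ, if ⊢ φ then φ is valid, i.e. M,q ⊨ φ for every HDML model M and every cell q of M. -/

import Mathlib

inductive HForm (Phi : Type) : Type
  | atom : Phi → HForm Phi
  | bot  : HForm Phi
  | imp  : HForm Phi → HForm Phi → HForm Phi
  | diaS : HForm Phi → HForm Phi
  | diaT : HForm Phi → HForm Phi
  deriving DecidableEq

namespace HForm

variable {Phi : Type}

def neg (φ : HForm Phi) : HForm Phi := imp φ bot

def top : HForm Phi := neg bot

def or' (φ ψ : HForm Phi) : HForm Phi := imp (neg φ) ψ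

def and' (φ ψ : HForm Phi) : HForm Phi := neg (imp φ (neg ψ))

def iff' (φ ψ : HForm Phi) : HForm Phi := and' (imp φ ψ) (imp ψ φ)

def boxS (φ : HForm Phi) : HForm Phi := neg (diaS (neg φ))

def boxT (φ : HForm Phi) : HForm Phi := neg (diaT (neg φ))

/-- The size of a formula: the number of occurrences of atomic propositions, `⊥`,
Boolean connectives `→`, and modal symbols `⟨s⟩`, `⟨t⟩`. -/
def size : HForm Phi → ℕ
  | atom _ => 1
  | bot => 1
  | imp a b => size a + size b + 1
  | diaS a => size a + 1
  | diaT a => size a + 1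

/-- `iterT i ψ` is `⟨t⟩^i ψ`, the `i`-fold application of `⟨t⟩` to `ψ`. -/
def iterT : ℕ → HForm Phi → HForm Phi
  | 0, ψ => ψ
  | n + 1, ψ => diaT (iterT n ψ)

/-- The subformula closure `C(φ)`. -/
def closure [DecidableEq Phi] : HForm Phi → Finset (HForm Phi)
  | atom p => {atom p}
  | bot => {bot}
  | imp a b => insert (imp a b) (closure a ∪ closure b)
  | diaS a => insert (diaS a) (closure a)
  | diaT a => insert (diaT a) (closure a)

/-- The upwards concurrency degree `↑deg`. -/
def updeg : HForm Phi → ℕ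
  | atom _ => 0
  | bot => 0
  | imp a b => max (updeg a) (updeg b)
  | diaS a => updeg a + 1
  | diaT a => updeg a - 1

end HForm

/-- The data of a cubical set: a family of cells `Q_n := cell n` together with, for each
`n ≥ 1` and each `1 ≤ i ≤ n`, source and target maps `s_i, t_i : Q_n → Q_{n-1}`
(here `src n i` and `tgt n i` are the maps `s_{i+1}, t_{i+1} : Q_{n+1} → Q_n` for `i : Fin (n+1)`). -/
structure PreCubical : Type 1 where
  cell : ℕ → Type
  src : ∀ n : ℕ, Fin (n + 1) → cell (n + 1) → cell n
  tgt : ∀ n : ℕ, Fin (n + 1) → cell (n + 1) → cell n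

/-- The cubical laws `α_i ∘ β_j = β_{j-1} ∘ α_i` for `1 ≤ i < j ≤ n` and `α, β ∈ {s, t}`:
with 0-based indices `i j : Fin (n+1)`, the 1-based indices are `I = i+1` and `J = j+2`,
so that `I < J` becomes `i ≤ j`. -/
def PreCubical.CubicalLaws (H : PreCubical) : Prop :=
  (∀ (n : ℕ) (i j : Fin (n + 1)), (i : ℕ) ≤ (j : ℕ) → ∀ q : H.cell (n + 2),
      H.src n i (H.src (n + 1) j.succ q) = H.src n j (H.src (n + 1) i.castSucc q)) ∧
  (∀ (n : ℕ) (i j : Fin (n + 1)), (i : ℕ) ≤ (j : ℕ) → ∀ q : H.cell (n + 2),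
      H.src n i (H.tgt (n + 1) j.succ q) = H.tgt n j (H.src (n + 1) i.castSucc q)) ∧
  (∀ (n : ℕ) (i j : Fin (n + 1)), (i : ℕ) ≤ (j : ℕ) → ∀ q : H.cell (n + 2),
      H.tgt n i (H.src (n + 1) j.succ q) = H.src n j (H.tgt (n + 1) i.castSucc q)) ∧
  (∀ (n : ℕ) (i j : Fin (n + 1)), (i : ℕ) ≤ (j : ℕ) → ∀ q : H.cell (n + 2),
      H.tgt n i (H.tgt (n + 1) j.succ q) = H.tgt n j (H.tgt (n + 1) i.castSucc q))

/-- HDML satisfaction over the data of a cubical set with a valuation. -/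
def PreCubical.Sat (H : PreCubical) {Phi : Type} (V : ∀ n : ℕ, H.cell n → Set Phi) :
    HForm Phi → ∀ n : ℕ, H.cell n → Prop
  | .atom p, n, q => p ∈ V n q
  | .bot, _, _ => False
  | .imp a b, n, q => PreCubical.Sat H V a n q → PreCubical.Sat H V b n q
  | .diaS a, n, q => ∃ (q' : H.cell (n + 1)) (i : Fin (n + 1)),
      H.src n i q' = q ∧ PreCubical.Sat H V a (n + 1) q'
  | .diaT _, 0, _ => False
  | .diaT a, m + 1, q => ∃ i : Fin (m + 1), PreCubical.Sat H V a m (H.tgt m i q)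

/-- An HDML model: a cubical set together with a valuation. -/
structure HDMLModel (Phi : Type) : Type 1 where
  pre : PreCubical
  laws : pre.CubicalLaws
  val : ∀ n : ℕ, pre.cell n → Set Phi

/-- Satisfaction `M,q ⊨ φ` in an HDML model. -/
def HDMLModel.Sat {Phi : Type} (M : HDMLModel Phi) : HForm Phi → ∀ n : ℕ, M.pre.cell n → Prop :=
  M.pre.Sat M.val

/-- A Boolean valuation respecting `⊥` and `→` (and treating every other formula as atomic). -/
def PropValuation {Phi : Type} (f : HForm Phi → Bool) : Prop :=
  f HForm.bot = false ∧ ∀ a b : HForm Phi, f (HForm.imp a b) = (!(f a) || f b)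

/-- `φ` is an instance of a propositional tautology. -/
def IsTautInstance {Phi : Type} (φ : HForm Phi) : Prop :=
  ∀ f : HForm Phi → Bool, PropValuation f → f φ = true

/-- Boolean combinations of atomic propositions. -/
inductive IsPropForm {Phi : Type} : HForm Phi → Prop
  | atom (p : Phi) : IsPropForm (HForm.atom p)
  | bot : IsPropForm HForm.bot
  | imp {a b : HForm Phi} : IsPropForm a → IsPropForm b → IsPropForm (HForm.imp a b)

/-- Conjunction of a list of formulas. -/
def conjList {Phi : Type} : List (HForm Phi) → HForm Phi
  | [] => HForm.top
  | [ψ] => ψ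
  | ψ :: l => HForm.and' ψ (conjList l)

/-- Uniform substitution of formulas for atomic propositions. -/
def HForm.subst {Phi : Type} (σ : Phi → HForm Phi) : HForm Phi → HForm Phi
  | .atom p => σ p
  | .bot => .bot
  | .imp a b => .imp (HForm.subst σ a) (HForm.subst σ b)
  | .diaS a => .diaS (HForm.subst σ a)
  | .diaT a => .diaT (HForm.subst σ a)

/-- Derivability `⊢ φ` in the HDML axiomatic system. -/
inductive Deriv {Phi : Type} : HForm Phi → Prop
  /-- all instances of propositional tautologies -/
  | taut {φ : HForm Phi} : IsTautInstance φ → Deriv φ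
  /-- `⟨s⟩⊥ ↔ ⊥` -/
  | diaS_bot : Deriv (HForm.iff' (HForm.diaS HForm.bot) HForm.bot)
  /-- `⟨t⟩⊥ ↔ ⊥` -/
  | diaT_bot : Deriv (HForm.iff' (HForm.diaT HForm.bot) HForm.bot)
  /-- `⟨s⟩(φ∨φ') ↔ ⟨s⟩φ∨⟨s⟩φ'` -/
  | diaS_or (φ φ' : HForm Phi) :
      Deriv (HForm.iff' (HForm.diaS (HForm.or' φ φ')) (HForm.or' (HForm.diaS φ) (HForm.diaS φ')))
  /-- `⟨t⟩(φ∨φ') ↔ ⟨t⟩φ∨⟨t⟩φ'` -/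
  | diaT_or (φ φ' : HForm Phi) :
      Deriv (HForm.iff' (HForm.diaT (HForm.or' φ φ')) (HForm.or' (HForm.diaT φ) (HForm.diaT φ')))
  /-- `[s]φ ↔ ¬⟨s⟩¬φ` -/
  | boxS_def (φ : HForm Phi) :
      Deriv (HForm.iff' (HForm.boxS φ) (HForm.neg (HForm.diaS (HForm.neg φ))))
  /-- `[t]φ ↔ ¬⟨t⟩¬φ` -/
  | boxT_def (φ : HForm Phi) :
      Deriv (HForm.iff' (HForm.boxT φ) (HForm.neg (HForm.diaT (HForm.neg φ))))
  /-- `⟨t⟩_i → ⟨t⟩^i⊤` for `i ≥ 1`, where `⟨t⟩_i` is a conjunction `⟨t⟩δ_1∧…∧⟨t⟩δ_i` with the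
  `δ_j` pairwise propositionally inconsistent Boolean combinations of atomic propositions -/
  | t_count (i : ℕ) (hi : 1 ≤ i) (δ : Fin i → HForm Phi)
      (hprop : ∀ j, IsPropForm (δ j))
      (hinc : ∀ j k, j ≠ k → IsTautInstance (HForm.neg (HForm.and' (δ j) (δ k)))) :
      Deriv (HForm.imp (conjList (List.ofFn fun j => HForm.diaT (δ j))) (HForm.iterT i HForm.top))
  /-- `⟨t⟩²⊤ → (⟨t⟩[t]φ → [t]⟨t⟩φ)` -/
  | tt_perm (φ : HForm Phi) :
      Deriv (HForm.imp (HForm.iterT 2 HForm.top)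
        (HForm.imp (HForm.diaT (HForm.boxT φ)) (HForm.boxT (HForm.diaT φ))))
  /-- `⟨s⟩[t]φ → [t]⟨s⟩φ` -/
  | st_perm (φ : HForm Phi) :
      Deriv (HForm.imp (HForm.diaS (HForm.boxT φ)) (HForm.boxT (HForm.diaS φ)))
  /-- `⟨t⟩[s]φ → [s]⟨t⟩φ` -/
  | ts_perm (φ : HForm Phi) :
      Deriv (HForm.imp (HForm.diaT (HForm.boxS φ)) (HForm.boxS (HForm.diaT φ)))
  /-- `⟨s⟩⟨t⟩^i⊤ → [s]⟨t⟩^i⊤` for every `i ≥ 0` -/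
  | s_level (i : ℕ) :
      Deriv (HForm.imp (HForm.diaS (HForm.iterT i HForm.top)) (HForm.boxS (HForm.iterT i HForm.top)))
  /-- `⟨t⟩⟨t⟩^i⊤ → [t]⟨t⟩^i⊤` for every `i ≥ 0` -/
  | t_level (i : ℕ) :
      Deriv (HForm.imp (HForm.diaT (HForm.iterT i HForm.top)) (HForm.boxT (HForm.iterT i HForm.top)))
  /-- `⟨t⟩^i⊤ → [s]⟨t⟩⟨t⟩^i⊤` for every `i ≥ 0` -/
  | level_up (i : ℕ) :
      Deriv (HForm.imp (HForm.iterT i HForm.top) (HForm.boxS (HForm.diaT (HForm.iterT i HForm.top))))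
  /-- `⟨s⟩⟨t⟩⟨t⟩^i⊤ → ⟨t⟩^i⊤` for every `i ≥ 0` -/
  | level_down (i : ℕ) :
      Deriv (HForm.imp (HForm.diaS (HForm.diaT (HForm.iterT i HForm.top))) (HForm.iterT i HForm.top))
  /-- `⟨s⟩⟨s⟩⟨t⟩φ → ⟨s⟩⟨t⟩⟨s⟩φ` -/
  | sst (φ : HForm Phi) :
      Deriv (HForm.imp (HForm.diaS (HForm.diaS (HForm.diaT φ))) (HForm.diaS (HForm.diaT (HForm.diaS φ))))
  /-- `⟨s⟩⟨t⟩⟨t⟩φ → ⟨t⟩⟨s⟩⟨t⟩φ` -/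
  | stt (φ : HForm Phi) :
      Deriv (HForm.imp (HForm.diaS (HForm.diaT (HForm.diaT φ))) (HForm.diaT (HForm.diaS (HForm.diaT φ))))
  /-- modus ponens -/
  | mp {φ φ' : HForm Phi} : Deriv φ → Deriv (HForm.imp φ φ') → Deriv φ'
  /-- from `φ→φ'` infer `⟨s⟩φ→⟨s⟩φ'` -/
  | monoS {φ φ' : HForm Phi} : Deriv (HForm.imp φ φ') → Deriv (HForm.imp (HForm.diaS φ) (HForm.diaS φ'))
  /-- from `φ→φ'` infer `⟨t⟩φ→⟨t⟩φ'` -/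
  | monoT {φ φ' : HForm Phi} : Deriv (HForm.imp φ φ') → Deriv (HForm.imp (HForm.diaT φ) (HForm.diaT φ'))
  /-- uniform substitution -/
  | usubst {φ : HForm Phi} (σ : Phi → HForm Phi) : Deriv φ → Deriv (HForm.subst σ φ)


section SoundnessAux

variable {Phi : Type}

lemma sat_imp (M : HDMLModel Phi) (a b : HForm Phi) (n : ℕ) (q : M.pre.cell n) :
    M.pre.Sat M.val (HForm.imp a b) n q ↔ (M.pre.Sat M.val a n q → M.pre.Sat M.val b n q) := Iff.rfl

lemma sat_neg (M : HDMLModel Phi) (a : HForm Phi) (n : ℕ) (q : M.pre.cell n) :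
    M.pre.Sat M.val (HForm.neg a) n q ↔ ¬ M.pre.Sat M.val a n q := Iff.rfl

lemma sat_top (M : HDMLModel Phi) (n : ℕ) (q : M.pre.cell n) :
    M.pre.Sat M.val HForm.top n q := fun h => h

lemma sat_and' (M : HDMLModel Phi) (a b : HForm Phi) (n : ℕ) (q : M.pre.cell n) :
    M.pre.Sat M.val (HForm.and' a b) n q ↔ (M.pre.Sat M.val a n q ∧ M.pre.Sat M.val b n q) := by
  show ((M.pre.Sat M.val a n q → (M.pre.Sat M.val b n q → False)) → False) ↔ _
  constructor
  · intro h
    by_cases ha : M.pre.Sat M.val a n q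
    · by_cases hb : M.pre.Sat M.val b n q
      · exact ⟨ha, hb⟩
      · exact (h (fun _ hb' => hb hb')).elim
    · exact (h (fun ha' _ => ha ha')).elim
  · rintro ⟨ha, hb⟩ h; exact h ha hb

lemma sat_or' (M : HDMLModel Phi) (a b : HForm Phi) (n : ℕ) (q : M.pre.cell n) :
    M.pre.Sat M.val (HForm.or' a b) n q ↔ (M.pre.Sat M.val a n q ∨ M.pre.Sat M.val b n q) := by
  show ((M.pre.Sat M.val a n q → False) → M.pre.Sat M.val b n q) ↔ _
  constructor
  · intro h
    by_cases ha : M.pre.Sat M.val a n q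
    · exact Or.inl ha
    · exact Or.inr (h ha)
  · rintro (ha | hb) hna
    · exact (hna ha).elim
    · exact hb

lemma sat_iff' (M : HDMLModel Phi) (a b : HForm Phi) (n : ℕ) (q : M.pre.cell n) :
    M.pre.Sat M.val (HForm.iff' a b) n q ↔ (M.pre.Sat M.val a n q ↔ M.pre.Sat M.val b n q) := by
  rw [HForm.iff', sat_and']
  exact ⟨fun ⟨h1, h2⟩ => ⟨h1, h2⟩, fun h => ⟨h.mp, h.mpr⟩⟩

lemma sat_diaS (M : HDMLModel Phi) (a : HForm Phi) (n : ℕ) (q : M.pre.cell n) :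
    M.pre.Sat M.val (HForm.diaS a) n q ↔
      ∃ (q' : M.pre.cell (n + 1)) (i : Fin (n + 1)),
        M.pre.src n i q' = q ∧ M.pre.Sat M.val a (n + 1) q' := Iff.rfl

lemma sat_diaT_zero (M : HDMLModel Phi) (a : HForm Phi) (q : M.pre.cell 0) :
    M.pre.Sat M.val (HForm.diaT a) 0 q ↔ False := Iff.rfl

lemma sat_diaT_succ (M : HDMLModel Phi) (a : HForm Phi) (m : ℕ) (q : M.pre.cell (m + 1)) :
    M.pre.Sat M.val (HForm.diaT a) (m + 1) q ↔
      ∃ i : Fin (m + 1), M.pre.Sat M.val a m (M.pre.tgt m i q) := Iff.rfl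

lemma sat_boxS (M : HDMLModel Phi) (a : HForm Phi) (n : ℕ) (q : M.pre.cell n) :
    M.pre.Sat M.val (HForm.boxS a) n q ↔
      ∀ (q' : M.pre.cell (n + 1)) (i : Fin (n + 1)),
        M.pre.src n i q' = q → M.pre.Sat M.val a (n + 1) q' := by
  show ((∃ (q' : M.pre.cell (n + 1)) (i : Fin (n + 1)),
      M.pre.src n i q' = q ∧ (M.pre.Sat M.val a (n + 1) q' → False)) → False) ↔ _
  constructor
  · intro h q' i hs
    by_contra hc
    exact h ⟨q', i, hs, hc⟩
  · rintro h ⟨q', i, hs, hna⟩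
    exact hna (h q' i hs)

lemma sat_boxT_succ (M : HDMLModel Phi) (a : HForm Phi) (m : ℕ) (q : M.pre.cell (m + 1)) :
    M.pre.Sat M.val (HForm.boxT a) (m + 1) q ↔
      ∀ i : Fin (m + 1), M.pre.Sat M.val a m (M.pre.tgt m i q) := by
  show ((∃ i : Fin (m + 1), (M.pre.Sat M.val a m (M.pre.tgt m i q) → False)) → False) ↔ _
  constructor
  · intro h i
    by_contra hc
    exact h ⟨i, hc⟩
  · rintro h ⟨i, hna⟩
    exact hna (h i)

lemma sat_boxT_zero (M : HDMLModel Phi) (a : HForm Phi) (q : M.pre.cell 0) :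
    M.pre.Sat M.val (HForm.boxT a) 0 q := fun h => h

lemma sat_iterT_top (M : HDMLModel Phi) (i : ℕ) :
    ∀ (n : ℕ) (q : M.pre.cell n), M.pre.Sat M.val (HForm.iterT i HForm.top) n q ↔ i ≤ n := by
  induction i with
  | zero =>
    intro n q
    exact ⟨fun _ => Nat.zero_le n, fun _ h => h⟩
  | succ i ih =>
    intro n q
    cases n with
    | zero => exact ⟨fun h => h.elim, fun h => absurd h (by omega)⟩
    | succ m =>
      rw [show HForm.iterT (i+1) HForm.top = HForm.diaT (HForm.iterT i HForm.top) from rfl,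
        sat_diaT_succ]
      constructor
      · rintro ⟨j, hj⟩
        have := (ih m _).mp hj
        omega
      · intro h
        exact ⟨⟨0, Nat.succ_pos m⟩, (ih m _).mpr (by omega)⟩

noncomputable def evalAt (M : HDMLModel Phi) (n : ℕ) (q : M.pre.cell n) (ψ : HForm Phi) : Bool :=
  @decide (M.pre.Sat M.val ψ n q) (Classical.dec _)

lemma evalAt_iff (M : HDMLModel Phi) (n : ℕ) (q : M.pre.cell n) (ψ : HForm Phi) :
    evalAt M n q ψ = true ↔ M.pre.Sat M.val ψ n q := by
  simp [evalAt]

lemma propVal_evalAt (M : HDMLModel Phi) (n : ℕ) (q : M.pre.cell n) :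
    PropValuation (evalAt M n q) := by
  constructor
  · simp [evalAt]
    exact fun h => h
  · intro a b
    by_cases ha : M.pre.Sat M.val a n q <;> by_cases hb : M.pre.Sat M.val b n q <;>
      simp [evalAt, ha, hb, sat_imp]

lemma sat_conjList_mem (M : HDMLModel Phi) (n : ℕ) (q : M.pre.cell n) :
    ∀ (l : List (HForm Phi)), M.pre.Sat M.val (conjList l) n q → ∀ ψ ∈ l, M.pre.Sat M.val ψ n q := by
  intro l
  induction l with
  | nil => intro _ ψ h; simp at h
  | cons ψ l ih =>
    cases l with
    | nil =>
      intro h χ hχ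
      rw [List.mem_singleton] at hχ
      subst hχ
      exact h
    | cons φ2 l2 =>
      intro h χ hχ
      have h' := (sat_and' M ψ (conjList (φ2 :: l2)) n q).mp h
      rcases List.mem_cons.mp hχ with hχ | hχ
      · subst hχ; exact h'.1
      · exact ih h'.2 χ hχ

/-- The substituted model used for soundness of uniform substitution. -/
noncomputable def substModel (M : HDMLModel Phi) (σ : Phi → HForm Phi) : HDMLModel Phi :=
  ⟨M.pre, M.laws, fun n q => {p | M.pre.Sat M.val (σ p) n q}⟩

lemma sat_subst (M : HDMLModel Phi) (σ : Phi → HForm Phi) (φ : HForm Phi) :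
    ∀ (n : ℕ) (q : M.pre.cell n),
      M.pre.Sat M.val (HForm.subst σ φ) n q ↔ (substModel M σ).Sat φ n q := by
  induction φ with
  | atom p => intro n q; exact Iff.rfl
  | bot => intro n q; exact Iff.rfl
  | imp a b iha ihb =>
    intro n q
    constructor
    · intro h ha; exact (ihb n q).mp (h ((iha n q).mpr ha))
    · intro h ha; exact (ihb n q).mpr (h ((iha n q).mp ha))
  | diaS a ih =>
    intro n q
    constructor
    · rintro ⟨q', i, hs, h⟩; exact ⟨q', i, hs, (ih _ _).mp h⟩
    · rintro ⟨q', i, hs, h⟩; exact ⟨q', i, hs, (ih _ _).mpr h⟩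
  | diaT a ih =>
    intro n q
    cases n with
    | zero => exact Iff.rfl
    | succ m =>
      constructor
      · rintro ⟨i, h⟩; exact ⟨i, (ih _ _).mp h⟩
      · rintro ⟨i, h⟩; exact ⟨i, (ih _ _).mpr h⟩

end SoundnessAux

/-- Soundness: every formula derivable in the HDML axiomatic system is valid,
i.e. holds at every cell of every HDML model. -/
theorem soundness {Phi : Type} (φ : HForm Phi) (h : Deriv φ) :
    ∀ (M : HDMLModel Phi) (n : ℕ) (q : M.pre.cell n), M.Sat φ n q := by
  induction h with
  | @taut φ ht =>
    intro M n q
    try simp only [HDMLModel.Sat]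
    exact (evalAt_iff M n q φ).mp (ht _ (propVal_evalAt M n q))
  | diaS_bot =>
    intro M n q
    try simp only [HDMLModel.Sat]
    rw [sat_iff']
    constructor
    · rintro ⟨q', i, _, h⟩; exact h
    · intro h; exact h.elim
  | diaT_bot =>
    intro M n q
    try simp only [HDMLModel.Sat]
    rw [sat_iff']
    constructor
    · intro h
      cases n with
      | zero => exact h
      | succ m => obtain ⟨i, h⟩ := h; exact h
    · intro h; exact h.elim
  | diaS_or a b =>
    intro M n q
    try simp only [HDMLModel.Sat]
    rw [sat_iff', sat_or']
    constructor
    · rintro ⟨q', i, hs, hab⟩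
      rcases (sat_or' M a b _ _).mp hab with h | h
      · exact Or.inl ⟨q', i, hs, h⟩
      · exact Or.inr ⟨q', i, hs, h⟩
    · rintro (⟨q', i, hs, h⟩ | ⟨q', i, hs, h⟩)
      · exact ⟨q', i, hs, (sat_or' M a b _ _).mpr (Or.inl h)⟩
      · exact ⟨q', i, hs, (sat_or' M a b _ _).mpr (Or.inr h)⟩
  | diaT_or a b =>
    intro M n q
    try simp only [HDMLModel.Sat]
    rw [sat_iff', sat_or']
    cases n with
    | zero =>
      constructor
      · intro h; exact h.elim
      · rintro (h | h) <;> exact h.elim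
    | succ m =>
      constructor
      · rintro ⟨i, hab⟩
        rcases (sat_or' M a b _ _).mp hab with h | h
        · exact Or.inl ⟨i, h⟩
        · exact Or.inr ⟨i, h⟩
      · rintro (⟨i, h⟩ | ⟨i, h⟩)
        · exact ⟨i, (sat_or' M a b _ _).mpr (Or.inl h)⟩
        · exact ⟨i, (sat_or' M a b _ _).mpr (Or.inr h)⟩
  | boxS_def a =>
    intro M n q
    try simp only [HDMLModel.Sat]
    rw [sat_iff']
    exact Iff.rfl
  | boxT_def a =>
    intro M n q
    try simp only [HDMLModel.Sat]
    rw [sat_iff']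
    exact Iff.rfl
  | t_count i hi δ hprop hinc =>
    intro M n q
    try simp only [HDMLModel.Sat]
    intro h
    have hδ : ∀ j : Fin i, M.pre.Sat M.val (HForm.diaT (δ j)) n q := by
      intro j
      exact sat_conjList_mem M n q _ h _ (List.mem_ofFn.mpr ⟨j, rfl⟩)
    cases n with
    | zero => exact ((sat_diaT_zero M _ q).mp (hδ ⟨0, hi⟩)).elim
    | succ m =>
      have hδ' : ∀ j : Fin i, ∃ k : Fin (m + 1), M.pre.Sat M.val (δ j) m (M.pre.tgt m k q) := fun j => hδ j
      choose idx hidx using hδ'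
      have inj : Function.Injective idx := by
        intro j k hjk
        by_contra hne
        have taut := hinc j k hne (evalAt M m (M.pre.tgt m (idx j) q))
          (propVal_evalAt M m (M.pre.tgt m (idx j) q))
        have hsat := (evalAt_iff M m (M.pre.tgt m (idx j) q) _).mp taut
        rw [sat_neg, sat_and'] at hsat
        refine hsat ⟨hidx j, ?_⟩
        rw [hjk]
        exact hidx k
      have hcard : i ≤ m + 1 := by
        have := Fintype.card_le_of_injective idx inj
        simpa using this
      exact (sat_iterT_top M i _ q).mpr hcard
  | tt_perm a =>
    intro M n q
    try simp only [HDMLModel.Sat]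
    obtain ⟨-, -, -, ltt⟩ := M.laws
    intro h2 hd
    have hn : 2 ≤ n := (sat_iterT_top M 2 n q).mp h2
    obtain ⟨m, rfl⟩ : ∃ m, n = m + 2 := ⟨n - 2, by omega⟩
    obtain ⟨i, hb⟩ := hd
    rw [sat_boxT_succ] at hb
    rw [sat_boxT_succ]
    intro j
    rw [sat_diaT_succ]
    rcases lt_trichotomy (i : ℕ) (j : ℕ) with hij | hij | hij
    · have hjm : (j : ℕ) < m + 2 := j.isLt
      set i0 : Fin (m + 1) := ⟨i, by omega⟩ with hi0
      set j0 : Fin (m + 1) := ⟨(j : ℕ) - 1, by omega⟩ with hj0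
      have hje : j0.succ = j := by apply Fin.ext; simp [hj0]; omega
      have hie : i0.castSucc = i := by apply Fin.ext; simp [hi0]
      refine ⟨i0, ?_⟩
      have hl := ltt m i0 j0 (by simp [hi0, hj0]; omega) q
      rw [hje, hie] at hl
      rw [hl]
      exact hb j0
    · have : i = j := Fin.ext hij
      subst this
      exact ⟨⟨0, Nat.succ_pos m⟩, hb ⟨0, Nat.succ_pos m⟩⟩
    · have him : (i : ℕ) < m + 2 := i.isLt
      set i1 : Fin (m + 1) := ⟨(i : ℕ) - 1, by omega⟩ with hi1
      set j1 : Fin (m + 1) := ⟨j, by omega⟩ with hj1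
      have hie : i1.succ = i := by apply Fin.ext; simp [hi1]; omega
      have hje : j1.castSucc = j := by apply Fin.ext; simp [hj1]
      refine ⟨i1, ?_⟩
      have hl := ltt m j1 i1 (by simp [hi1, hj1]; omega) q
      rw [hie, hje] at hl
      rw [← hl]
      exact hb j1
  | st_perm a =>
    intro M n q
    try simp only [HDMLModel.Sat]
    obtain ⟨-, lst, lts, -⟩ := M.laws
    rintro ⟨q', i, hsq, hb⟩
    rw [sat_boxT_succ] at hb
    cases n with
    | zero => exact fun hf => hf
    | succ m =>
      rw [sat_boxT_succ]
      intro j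
      rw [sat_diaS]
      by_cases hij : (i : ℕ) ≤ (j : ℕ)
      · have hjm : (j : ℕ) < m + 1 := j.isLt
        set i0 : Fin (m + 1) := ⟨i, by omega⟩ with hi0
        have hie : i0.castSucc = i := by apply Fin.ext; simp [hi0]
        refine ⟨M.pre.tgt (m + 1) j.succ q', i0, ?_, hb j.succ⟩
        have hl := lst m i0 j (by simp [hi0]; omega) q'
        rw [hie, hsq] at hl
        exact hl
      · have him : (i : ℕ) < m + 2 := i.isLt
        set i1 : Fin (m + 1) := ⟨(i : ℕ) - 1, by omega⟩ with hi1
        have hie : i1.succ = i := by apply Fin.ext; simp [hi1]; omega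
        refine ⟨M.pre.tgt (m + 1) j.castSucc q', i1, ?_, hb j.castSucc⟩
        have hl := lts m j i1 (by simp [hi1]; omega) q'
        rw [hie, hsq] at hl
        exact hl.symm
  | ts_perm a =>
    intro M n q
    try simp only [HDMLModel.Sat]
    obtain ⟨-, lst, lts, -⟩ := M.laws
    intro h
    cases n with
    | zero => exact h.elim
    | succ m =>
      obtain ⟨i, hbs⟩ := h
      rw [sat_boxS] at hbs
      rw [sat_boxS]
      intro q' j hsq
      rw [sat_diaT_succ]
      by_cases hji : (j : ℕ) ≤ (i : ℕ)
      · have him : (i : ℕ) < m + 1 := i.isLt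
        set j0 : Fin (m + 1) := ⟨j, by omega⟩ with hj0
        have hje : j0.castSucc = j := by apply Fin.ext; simp [hj0]
        refine ⟨i.succ, hbs _ j0 ?_⟩
        have hl := lst m j0 i (by simp [hj0]; omega) q'
        rw [hje, hsq] at hl
        exact hl
      · have hjm : (j : ℕ) < m + 2 := j.isLt
        set j1 : Fin (m + 1) := ⟨(j : ℕ) - 1, by omega⟩ with hj1
        have hje : j1.succ = j := by apply Fin.ext; simp [hj1]; omega
        refine ⟨i.castSucc, hbs _ j1 ?_⟩
        have hl := lts m i j1 (by simp [hj1]; omega) q'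
        rw [hje, hsq] at hl
        exact hl.symm
  | s_level i =>
    intro M n q
    try simp only [HDMLModel.Sat]
    rintro ⟨q', i', _, hi⟩
    have hle : i ≤ n + 1 := (sat_iterT_top M i _ q').mp hi
    rw [sat_boxS]
    intro q'' j _
    exact (sat_iterT_top M i _ q'').mpr hle
  | t_level i =>
    intro M n q
    try simp only [HDMLModel.Sat]
    intro h
    cases n with
    | zero => exact h.elim
    | succ m =>
      obtain ⟨k, hk⟩ := h
      have hle : i ≤ m := (sat_iterT_top M i _ _).mp hk
      rw [sat_boxT_succ]
      intro j
      exact (sat_iterT_top M i _ _).mpr hle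
  | level_up i =>
    intro M n q
    try simp only [HDMLModel.Sat]
    intro h
    have hn : i ≤ n := (sat_iterT_top M i n q).mp h
    rw [sat_boxS]
    intro q' j _
    rw [sat_diaT_succ]
    exact ⟨⟨0, Nat.succ_pos n⟩, (sat_iterT_top M i _ _).mpr hn⟩
  | level_down i =>
    intro M n q
    try simp only [HDMLModel.Sat]
    rintro ⟨q', i', hs, hd⟩
    obtain ⟨k, hk⟩ := hd
    exact (sat_iterT_top M i n q).mpr ((sat_iterT_top M i _ _).mp hk)
  | sst a =>
    intro M n q
    try simp only [HDMLModel.Sat]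
    obtain ⟨lss, lst, lts, -⟩ := M.laws
    rintro ⟨q1, i1, h1, q2', i2, h2, hdt⟩
    obtain ⟨k, hk⟩ := hdt
    have hfin : ∀ (γ : Fin (n + 1)) (β : Fin (n + 2)),
        M.pre.src n γ (M.pre.src (n + 1) β q2') = q → (β : ℕ) ≠ (k : ℕ) →
        M.pre.Sat M.val (HForm.diaS (HForm.diaT (HForm.diaS a))) n q := by
      intro γ β hq hbk
      rcases Nat.lt_or_ge (β : ℕ) (k : ℕ) with hlt | hge
      · have hkm : (k : ℕ) < n + 2 := k.isLt
        set ks : Fin (n + 1) := ⟨(k : ℕ) - 1, by omega⟩ with hks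
        set βc : Fin (n + 1) := ⟨β, by omega⟩ with hβc
        have e1 : ks.succ = k := by apply Fin.ext; simp [hks]; omega
        have e2 : βc.castSucc = β := by apply Fin.ext; simp [hβc]
        have hl := lst n βc ks (by simp [hβc, hks]; omega) q2'
        rw [e1, e2] at hl
        exact ⟨_, γ, hq, ks, _, βc, hl, hk⟩
      · have hlt' : (k : ℕ) < (β : ℕ) := by omega
        have hβm : (β : ℕ) < n + 2 := β.isLt
        set βs : Fin (n + 1) := ⟨(β : ℕ) - 1, by omega⟩ with hβs
        set kc : Fin (n + 1) := ⟨k, by omega⟩ with hkc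
        have e1 : βs.succ = β := by apply Fin.ext; simp [hβs]; omega
        have e2 : kc.castSucc = k := by apply Fin.ext; simp [hkc]
        have hl := lts n kc βs (by simp [hβs, hkc]; omega) q2'
        rw [e1, e2] at hl
        exact ⟨_, γ, hq, kc, _, βs, hl.symm, hk⟩
    by_cases hik : (i2 : ℕ) = (k : ℕ)
    · rcases Nat.lt_or_ge (i1 : ℕ) (i2 : ℕ) with hc | hc
      · have hi2m : (i2 : ℕ) < n + 2 := i2.isLt
        set γB : Fin (n + 1) := ⟨(i2 : ℕ) - 1, by omega⟩ with hγB
        have e1 : γB.succ = i2 := by apply Fin.ext; simp [hγB]; omega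
        have hl := lss n i1 γB (by simp [hγB]; omega) q2'
        rw [e1] at hl
        have h3 : M.pre.src n γB (M.pre.src (n + 1) i1.castSucc q2') = q := by
          rw [← hl, h2]; exact h1
        exact hfin γB i1.castSucc h3 (by simp; omega)
      · have hi1m : (i1 : ℕ) < n + 1 := i1.isLt
        set γB : Fin (n + 1) := ⟨i2, by omega⟩ with hγB
        have e1 : γB.castSucc = i2 := by apply Fin.ext; simp [hγB]
        have hl := lss n γB i1 (by simp [hγB]; omega) q2'
        rw [e1] at hl
        have h3 : M.pre.src n γB (M.pre.src (n + 1) i1.succ q2') = q := by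
          rw [hl, h2]; exact h1
        exact hfin γB i1.succ h3 (by simp; omega)
    · exact hfin i1 i2 (by rw [h2]; exact h1) hik
  | stt a =>
    intro M n q
    try simp only [HDMLModel.Sat]
    obtain ⟨-, lst, lts, ltt⟩ := M.laws
    rintro ⟨q1, i, h1, hd⟩
    obtain ⟨j, hdj⟩ := hd
    cases n with
    | zero => exact hdj.elim
    | succ m =>
      obtain ⟨k, hk⟩ := hdj
      have key : ∃ (j' : Fin (m + 2)) (k' : Fin (m + 1)),
          (j' : ℕ) ≠ (i : ℕ) ∧ M.pre.Sat M.val a m (M.pre.tgt m k' (M.pre.tgt (m + 1) j' q1)) := by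
        by_cases hji : (j : ℕ) = (i : ℕ)
        · rcases Nat.lt_or_ge (k : ℕ) (j : ℕ) with hc | hc
          · have hjm : (j : ℕ) < m + 2 := j.isLt
            set b : Fin (m + 1) := ⟨(j : ℕ) - 1, by omega⟩ with hb
            have e1 : b.succ = j := by apply Fin.ext; simp [hb]; omega
            have hl := ltt m k b (by simp [hb]; omega) q1
            rw [e1] at hl
            refine ⟨k.castSucc, b, by simp; omega, ?_⟩
            rw [← hl]
            exact hk
          · have hkm : (k : ℕ) < m + 1 := k.isLt
            set jc : Fin (m + 1) := ⟨j, by omega⟩ with hjc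
            have e1 : jc.castSucc = j := by apply Fin.ext; simp [hjc]
            have hl := ltt m jc k (by simp [hjc]; omega) q1
            rw [e1] at hl
            refine ⟨k.succ, jc, by simp; omega, ?_⟩
            rw [hl]
            exact hk
        · exact ⟨j, k, hji, hk⟩
      obtain ⟨j', k', hne, hk'⟩ := key
      rw [sat_diaT_succ]
      rcases Nat.lt_or_ge (i : ℕ) (j' : ℕ) with hc | hc
      · have hjm : (j' : ℕ) < m + 2 := j'.isLt
        set ic : Fin (m + 1) := ⟨i, by omega⟩ with hic
        set j0 : Fin (m + 1) := ⟨(j' : ℕ) - 1, by omega⟩ with hj0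
        have e1 : j0.succ = j' := by apply Fin.ext; simp [hj0]; omega
        have e2 : ic.castSucc = i := by apply Fin.ext; simp [hic]
        have hl := lst m ic j0 (by simp [hic, hj0]; omega) q1
        rw [e1, e2, h1] at hl
        exact ⟨j0, _, ic, hl, k', hk'⟩
      · have hc' : (j' : ℕ) < (i : ℕ) := by omega
        have him : (i : ℕ) < m + 2 := i.isLt
        set jc : Fin (m + 1) := ⟨j', by omega⟩ with hjc
        set i0 : Fin (m + 1) := ⟨(i : ℕ) - 1, by omega⟩ with hi0
        have e1 : i0.succ = i := by apply Fin.ext; simp [hi0]; omega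
        have e2 : jc.castSucc = j' := by apply Fin.ext; simp [hjc]
        have hl := lts m jc i0 (by simp [hjc, hi0]; omega) q1
        rw [e1, e2, h1] at hl
        exact ⟨jc, _, i0, hl.symm, k', hk'⟩
  | mp h1 h2 ih1 ih2 =>
    intro M n q
    try simp only [HDMLModel.Sat]
    exact ih2 M n q (ih1 M n q)
  | monoS h ih =>
    intro M n q
    try simp only [HDMLModel.Sat]
    rintro ⟨q', i, hs, ha⟩
    exact ⟨q', i, hs, ih M (n + 1) q' ha⟩
  | monoT h ih =>
    intro M n q
    try simp only [HDMLModel.Sat]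
    intro hd
    cases n with
    | zero => exact hd.elim
    | succ m =>
      obtain ⟨i, ha⟩ := hd
      exact ⟨i, ih M m _ ha⟩
  | usubst σ hφ ih =>
    intro M n q
    try simp only [HDMLModel.Sat]
    exact (sat_subst M σ _ n q).mpr (ih (substModel M σ) n q)
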